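/- The pattern preorder reverses Cantor–Bendixson ranks: let S ⊆ Q^{ℤ²} be a closed, shift-invariant set and let x, y ∈ S be ranked elements with x ≺ y (x ≼ y but not y ≼ x); then rk(x) > rk(y). -/

import Mathlib

open Set

/-- A configuration assigns a state to each cell of the plane. -/
abbrev Config (Q : Type*) : Type _ := (ℤ × ℤ) → Q

/-- The shift by a vector `v`: `σ_v c = fun x => c (x + v)`. -/
def shiftC {Q : Type*} (v : ℤ × ℤ) (c : Config Q) : Config Q := fun x => c (x + v)

/-- The pattern `P` with (finite) domain `V` appears in `c` at translate `t`. -/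
def AppearsAt {Q : Type*} (c : Config Q) (V : Finset (ℤ × ℤ)) (P : (ℤ × ℤ) → Q)
    (t : ℤ × ℤ) : Prop :=
  ∀ x ∈ V, c (x + t) = P x

/-- The pattern `P` with (finite) domain `V` appears in `c`. -/
def Appears {Q : Type*} (c : Config Q) (V : Finset (ℤ × ℤ)) (P : (ℤ × ℤ) → Q) : Prop :=
  ∃ t : ℤ × ℤ, AppearsAt c V P t

/-- The pattern preorder: `x ≼ y` iff every pattern appearing in `x` appears in `y`. -/
def PatLe {Q : Type*} (x y : Config Q) : Prop :=
  ∀ (V : Finset (ℤ × ℤ)) (P : (ℤ × ℤ) → Q), Appears x V P → Appears y V P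

/-- A set of configurations is shift-invariant. -/
def ShiftInvariant {Q : Type*} (S : Set (Config Q)) : Prop :=
  ∀ c ∈ S, ∀ v : ℤ × ℤ, shiftC v c ∈ S

/-- `c` is an isolated point of `S` (in the subspace topology). -/
def IsolatedIn {Q : Type*} [TopologicalSpace Q] (S : Set (Config Q)) (c : Config Q) : Prop :=
  ∃ U : Set (Config Q), IsOpen U ∧ U ∩ S = {c}

/-- The topological derivative: the non-isolated points of `S`. -/
def derivSet {Q : Type*} [TopologicalSpace Q] (S : Set (Config Q)) : Set (Config Q) :=
  {c ∈ S | ¬ IsolatedIn S c}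

/-- Transfinite iteration of the topological derivative (Cantor–Bendixson). -/
noncomputable def CBIter {Q : Type*} [TopologicalSpace Q] (S : Set (Config Q))
    (o : Ordinal) : Set (Config Q) :=
  Ordinal.limitRecOn o S (fun _ ih => derivSet ih)
    (fun o _ ih => ⋂ (β : {β : Ordinal // β < o}), ih β.1 β.2)

/-- The Cantor–Bendixson rank of `c` in `S`: least `λ` with `c ∉ S^{(λ)}`. -/
noncomputable def CBRank {Q : Type*} [TopologicalSpace Q] (S : Set (Config Q))
    (c : Config Q) : Ordinal :=
  sInf {l : Ordinal | c ∉ CBIter S l}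

/-- A configuration is periodic iff its shift orbit is finite (equivalently, its
stabilizer has finite index in `ℤ²`). -/
def IsPeriodic {Q : Type*} (c : Config Q) : Prop :=
  (Set.range fun v : ℤ × ℤ => shiftC v c).Finite

/-- `c` is a tiling for the tile-set with domain `V` and allowed patterns `A`. -/
def IsTiling {Q : Type*} (V : Finset (ℤ × ℤ)) (A : Set ({x // x ∈ V} → Q))
    (c : Config Q) : Prop :=
  ∀ t : ℤ × ℤ, (fun y : {x // x ∈ V} => c (t + y.1)) ∈ A

/-- The set of tilings of a tile-set. -/
def Tilings {Q : Type*} (V : Finset (ℤ × ℤ)) (A : Set ({x // x ∈ V} → Q)) :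
    Set (Config Q) :=
  {c | IsTiling V A c}

section Aux

universe q u v w

variable {Q : Type q}

lemma shift_continuous [TopologicalSpace Q] (v : ℤ × ℤ) :
    Continuous (shiftC (Q := Q) v) :=
  continuous_pi fun _ => continuous_apply _

lemma shift_injective (v : ℤ × ℤ) : Function.Injective (shiftC (Q := Q) v) := by
  intro a b h
  funext z
  have := congrFun h (z - v)
  simpa [shiftC] using this

lemma derivSet_closed [TopologicalSpace Q] {S : Set (Config Q)} (hS : IsClosed S) :
    IsClosed (derivSet S) := by
  rw [← isOpen_compl_iff, isOpen_iff_forall_mem_open]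
  intro c hc
  by_cases hcS : c ∈ S
  · have hiso : IsolatedIn S c := by
      by_contra h
      exact hc ⟨hcS, h⟩
    obtain ⟨U, hU, hUS⟩ := hiso
    refine ⟨U, ?_, hU, ?_⟩
    · intro d hdU hdD
      have hd : d ∈ U ∩ S := ⟨hdU, hdD.1⟩
      rw [hUS, Set.mem_singleton_iff] at hd
      subst hd
      exact hdD.2 ⟨U, hU, hUS⟩
    · have : c ∈ U ∩ S := by rw [hUS]; rfl
      exact this.1
  · exact ⟨Sᶜ, fun d hd hdD => hd hdD.1, hS.isOpen_compl, hcS⟩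

lemma derivSet_shiftInv [TopologicalSpace Q] {S : Set (Config Q)} (h : ShiftInvariant S) :
    ShiftInvariant (derivSet S) := by
  rintro c ⟨hcS, hni⟩ v
  refine ⟨h c hcS v, ?_⟩
  rintro ⟨U, hU, hUS⟩
  apply hni
  refine ⟨shiftC v ⁻¹' U, hU.preimage (shift_continuous v), ?_⟩
  ext d
  constructor
  · rintro ⟨hdU, hdS⟩
    have hd : shiftC v d ∈ U ∩ S := ⟨hdU, h d hdS v⟩
    rw [hUS, Set.mem_singleton_iff] at hd
    exact shift_injective v hd
  · intro hd
    have hd' : d = c := hd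
    subst hd'
    have : shiftC v d ∈ U ∩ S := by rw [hUS]; rfl
    exact ⟨this.1, hcS⟩

lemma CBIter_zero [TopologicalSpace Q] (S : Set (Config Q)) : CBIter S 0 = S :=
  Ordinal.limitRecOn_zero _ _ _

lemma CBIter_succ [TopologicalSpace Q] (S : Set (Config Q)) (o : Ordinal) :
    CBIter S (Order.succ o) = derivSet (CBIter S o) :=
  Ordinal.limitRecOn_succ _ _ _ _

lemma CBIter_limit [TopologicalSpace Q] (S : Set (Config Q)) {o : Ordinal}
    (ho : Order.IsSuccLimit o) :
    CBIter S o = ⋂ (β : {β : Ordinal // β < o}), CBIter S β.1 :=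
  Ordinal.limitRecOn_limit _ _ _ _ ho

lemma CBIter_closed_inv [TopologicalSpace Q] {S : Set (Config Q)}
    (hcl : IsClosed S) (hinv : ShiftInvariant S) (o : Ordinal) :
    IsClosed (CBIter S o) ∧ ShiftInvariant (CBIter S o) := by
  induction o using Ordinal.limitRecOn with
  | zero => rw [CBIter_zero]; exact ⟨hcl, hinv⟩
  | add_one o ih => rw [Ordinal.add_one_eq_succ, CBIter_succ]; exact ⟨derivSet_closed ih.1, derivSet_shiftInv ih.2⟩
  | limit o ho ih =>
    rw [CBIter_limit _ ho]
    refine ⟨isClosed_iInter fun β => (ih β.1 β.2).1, fun c hc v => ?_⟩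
    exact Set.mem_iInter.2 fun β => (ih β.1 β.2).2 c (Set.mem_iInter.1 hc β) v

lemma mem_closure_orbit [TopologicalSpace Q] {x y : Config Q} (h : PatLe x y) :
    x ∈ closure (Set.range fun v : ℤ × ℤ => shiftC v y) := by
  rw [mem_closure_iff]
  intro U hU hxU
  obtain ⟨I, u, hu, hsub⟩ := isOpen_pi_iff.1 hU x hxU
  have hap : Appears x I x := ⟨0, fun a _ => by simp⟩
  obtain ⟨t, ht⟩ := h I x hap
  refine ⟨shiftC t y, ?_, ⟨t, rfl⟩⟩
  apply hsub
  intro i hi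
  have hxi : shiftC t y i = x i := ht i hi
  rw [hxi]
  exact (hu i hi).2

lemma patLe_of_shift_eq {v : ℤ × ℤ} {y x : Config Q} (h : shiftC v y = x) :
    PatLe y x := by
  rintro V P ⟨t, ht⟩
  refine ⟨t - v, fun a ha => ?_⟩
  have h1 : x (a + (t - v)) = y (a + (t - v) + v) := by rw [← h]; rfl
  rw [h1, show a + (t - v) + v = a + t by ring]
  exact ht a ha

lemma derivSet_subset [TopologicalSpace Q] (S : Set (Config Q)) : derivSet S ⊆ S :=
  fun _ hc => hc.1

lemma derivSet_mono [TopologicalSpace Q] {A B : Set (Config Q)} (h : A ⊆ B) :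
    derivSet A ⊆ derivSet B := by
  rintro c ⟨hcA, hni⟩
  refine ⟨h hcA, ?_⟩
  rintro ⟨U, hU, hUB⟩
  apply hni
  refine ⟨U, hU, Set.Subset.antisymm ?_ ?_⟩
  · intro d hd
    have hdB : d ∈ U ∩ B := ⟨hd.1, h hd.2⟩
    rw [hUB] at hdB
    exact hdB
  · intro d hd
    rw [Set.mem_singleton_iff] at hd
    subst hd
    have : d ∈ U ∩ B := by rw [hUB]; rfl
    exact ⟨this.1, hcA⟩

lemma CBIter_anti [TopologicalSpace Q] (S : Set (Config Q)) :
    ∀ {o o' : Ordinal}, o ≤ o' → CBIter S o' ⊆ CBIter S o := by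
  intro o o' h
  induction o' using Ordinal.limitRecOn with
  | zero => rw [nonpos_iff_eq_zero.1 h]
  | add_one o'' ih =>
    rcases eq_or_lt_of_le h with rfl | h'
    · exact subset_rfl
    · rw [Ordinal.add_one_eq_succ, CBIter_succ]
      exact (derivSet_subset _).trans (ih (Order.lt_succ_iff.1 h'))
  | limit o'' ho ih =>
    rcases eq_or_lt_of_le h with rfl | h'
    · exact subset_rfl
    · rw [CBIter_limit _ ho]
      exact Set.iInter_subset (fun β : {β : Ordinal // β < o''} => CBIter S β.1) ⟨o, h'⟩

lemma exists_stable {Q : Type q} [Fintype Q] [TopologicalSpace Q] (S : Set (Config Q)) :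
    ∃ o : Ordinal.{v}, CBIter S (Order.succ o) = CBIter S o := by
  by_contra h
  push_neg at h
  have hsa : StrictAnti (fun o : Ordinal.{v} => CBIter S o) := by
    intro a b hab
    have h1 : CBIter S b ⊆ CBIter S (Order.succ a) := CBIter_anti S (Order.succ_le_of_lt hab)
    have h2 : CBIter S (Order.succ a) ⊆ CBIter S a := CBIter_anti S (Order.le_succ a)
    refine lt_of_le_of_ne (h1.trans h2) ?_
    intro heq
    have heq' : CBIter S b = CBIter S a := heq
    apply h a
    apply Set.Subset.antisymm h2
    rw [← heq']
    exact h1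
  exact not_injective_of_ordinal _ hsa.injective

lemma stable_subset [TopologicalSpace Q] {S E : Set (Config Q)}
    (hE : derivSet E = E) (hES : E ⊆ S) : ∀ l : Ordinal.{u}, E ⊆ CBIter S l := by
  intro l
  induction l using Ordinal.limitRecOn with
  | zero => rw [CBIter_zero]; exact hES
  | add_one o ih =>
    rw [Ordinal.add_one_eq_succ, CBIter_succ]
    exact hE ▸ derivSet_mono ih
  | limit o ho ih =>
    rw [CBIter_limit _ ho]
    exact Set.subset_iInter fun β => ih β.1 β.2

lemma ranked_transfer {Q : Type q} [Fintype Q] [TopologicalSpace Q] {S : Set (Config Q)}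
    {c : Config Q} (h : ∃ l : Ordinal.{u}, c ∉ CBIter S l) :
    ∃ l : Ordinal.{v}, c ∉ CBIter S l := by
  obtain ⟨o₀, ho₀⟩ : ∃ o : Ordinal.{v}, CBIter S (Order.succ o) = CBIter S o := exists_stable S
  refine ⟨o₀, fun hc => ?_⟩
  obtain ⟨l, hl⟩ := h
  apply hl
  have hE : derivSet (CBIter S o₀) = CBIter S o₀ := by rw [← CBIter_succ, ho₀]
  have hES : CBIter S o₀ ⊆ S := by
    have := CBIter_anti S (zero_le (a := o₀))
    rwa [CBIter_zero] at this
  exact stable_subset hE hES l hc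

lemma mem_CBIter_of_lt_rank [TopologicalSpace Q] {S : Set (Config Q)} {c : Config Q}
    {α : Ordinal.{u}} (h : α < CBRank.{q, u} S c) : c ∈ CBIter S α := by
  by_contra hc
  have hmem : α ∈ {l : Ordinal | c ∉ CBIter S l} := hc
  have : CBRank S c ≤ α := csInf_le (OrderBot.bddBelow _) hmem
  exact absurd this (not_le.2 h)

lemma not_mem_CBIter_rank [Fintype Q] [TopologicalSpace Q] {S : Set (Config Q)} {c : Config Q}
    (h : ∃ l : Ordinal.{w}, c ∉ CBIter S l) : c ∉ CBIter S (CBRank.{q, u} S c) := by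
  obtain ⟨l, hl⟩ : ∃ l : Ordinal.{u}, c ∉ CBIter S l := ranked_transfer h
  exact csInf_mem (s := {l : Ordinal.{u} | c ∉ CBIter S l}) ⟨l, hl⟩

lemma rank_succ [Fintype Q] [TopologicalSpace Q] {S : Set (Config Q)} {c : Config Q}
    (hc : c ∈ S) (hr : ∃ l : Ordinal.{w}, c ∉ CBIter S l) :
    ∃ β : Ordinal.{u}, CBRank.{q, u} S c = Order.succ β := by
  rcases Ordinal.zero_or_succ_or_isSuccLimit (CBRank.{q, u} S c) with h0 | ⟨β, hβ⟩ | hl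
  · exfalso
    have : c ∉ CBIter S (CBRank.{q, u} S c) := not_mem_CBIter_rank hr
    rw [h0, CBIter_zero] at this
    exact this hc
  · exact ⟨β, hβ.symm⟩
  · exfalso
    have hnm : c ∉ CBIter S (CBRank.{q, u} S c) := not_mem_CBIter_rank hr
    rw [CBIter_limit _ hl] at hnm
    simp only [Set.mem_iInter, not_forall] at hnm
    obtain ⟨⟨β, hβ⟩, hcβ⟩ := hnm
    have hmem : β ∈ {l : Ordinal | c ∉ CBIter S l} := hcβ
    have : CBRank S c ≤ β := csInf_le (OrderBot.bddBelow _) hmem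
    exact absurd this (not_le.2 hβ)

end Aux

/-- The pattern preorder reverses Cantor–Bendixson ranks: if `x`
and `y` are ranked and `x ≺ y` then `rk(x) > rk(y)`. -/
theorem stmt11 {Q : Type*} [Fintype Q] [Nonempty Q] [TopologicalSpace Q] [DiscreteTopology Q]
    (S : Set (Config Q)) (hcl : IsClosed S) (hinv : ShiftInvariant S)
    (x y : Config Q) (hx : x ∈ S) (hy : y ∈ S)
    (hrx : ∃ lam : Ordinal, x ∉ CBIter S lam) (hry : ∃ lam : Ordinal, y ∉ CBIter S lam)
    (hxy : PatLe x y) (hyx : ¬ PatLe y x) :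
    CBRank S y < CBRank S x := by
  have hclosure : x ∈ closure (Set.range fun v : ℤ × ℤ => shiftC v y) :=
    mem_closure_orbit hxy
  have hxin : ∀ α, y ∈ CBIter S α → x ∈ CBIter S α := by
    intro α hyα
    obtain ⟨hc, hi⟩ := CBIter_closed_inv hcl hinv α
    have hsub : (Set.range fun v : ℤ × ℤ => shiftC v y) ⊆ CBIter S α := by
      rintro _ ⟨v, rfl⟩
      exact hi y hyα v
    exact closure_minimal hsub hc hclosure
  have hle : CBRank S y ≤ CBRank S x := by
    by_contra h
    push_neg at h
    exact not_mem_CBIter_rank hrx (hxin _ (mem_CBIter_of_lt_rank h))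
  rcases lt_or_eq_of_le hle with h | h
  · exact h
  · exfalso
    obtain ⟨β, hβ⟩ := rank_succ hx hrx
    have hβlt : β < CBRank S x := by rw [hβ]; exact Order.lt_succ β
    have hxT : x ∈ CBIter S β := mem_CBIter_of_lt_rank hβlt
    have hyT : y ∈ CBIter S β := mem_CBIter_of_lt_rank (by rw [h]; exact hβlt)
    have hxiso : IsolatedIn (CBIter S β) x := by
      have hnx : x ∉ CBIter S (CBRank S x) := not_mem_CBIter_rank hrx
      rw [hβ, CBIter_succ] at hnx
      by_contra hni
      exact hnx ⟨hxT, hni⟩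
    obtain ⟨U, hU, hUT⟩ := hxiso
    have hxU : x ∈ U := by
      have : x ∈ U ∩ CBIter S β := by rw [hUT]; rfl
      exact this.1
    obtain ⟨z, hzU, v, rfl⟩ := mem_closure_iff.1 hclosure U hU hxU
    have hzT : shiftC v y ∈ CBIter S β := (CBIter_closed_inv hcl hinv β).2 y hyT v
    have heq : shiftC v y = x := by
      have : shiftC v y ∈ U ∩ CBIter S β := ⟨hzU, hzT⟩
      rwa [hUT, Set.mem_singleton_iff] at this
    exact hyx (patLe_of_shift_eq heq)
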